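/- Let A be a Hermitian d×d complex matrix with ‖A‖ ≤ 1. Then the following are equivalent: (i) A² = I; (ii) for every representation c·A = c₀·B₀ + c₁·B₁ with c, c₀, c₁ > 0, c₀ + c₁ = c, and B₀, B₁ Hermitian with ‖B₀‖, ‖B₁‖ ≤ 1, one has B₀ = B₁ = A. -/

import Mathlib

open scoped Matrix Matrix.Norms.L2Operator

namespace Stmt4Aux
open Matrix
variable {d : ℕ}
open Matrix
variable {d : ℕ}

lemma rsmul (c : ℝ) (M : Matrix (Fin d) (Fin d) ℂ) : c • M = (c : ℂ) • M := by
  ext i j; simp [Matrix.smul_apply, Complex.real_smul]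

lemma vsmul (c : ℝ) (w : Fin d → ℂ) : c • w = (c : ℂ) • w := by
  funext i; simp [Complex.real_smul]

lemma dot_bound {B : Matrix (Fin d) (Fin d) ℂ} (hBn : ‖B‖ ≤ 1)
    (v : EuclideanSpace ℂ (Fin d)) (hv : ‖v‖ = 1) :
    ‖dotProduct (star (WithLp.equiv 2 (Fin d → ℂ) v)) (B *ᵥ WithLp.equiv 2 (Fin d → ℂ) v)‖ ≤ 1 := by
  rw [dotProduct_comm, ← EuclideanSpace.inner_toLp_toLp]
  calc ‖(inner ℂ ((WithLp.equiv 2 (Fin d → ℂ)).symm (WithLp.equiv 2 (Fin d → ℂ) v))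
        ((WithLp.equiv 2 (Fin d → ℂ)).symm (B *ᵥ WithLp.equiv 2 (Fin d → ℂ) v)) : ℂ)‖
      ≤ ‖(WithLp.equiv 2 (Fin d → ℂ)).symm (WithLp.equiv 2 (Fin d → ℂ) v)‖ *
        ‖(WithLp.equiv 2 (Fin d → ℂ)).symm (B *ᵥ WithLp.equiv 2 (Fin d → ℂ) v)‖ :=
        norm_inner_le_norm _ _
    _ ≤ 1 * (‖B‖ * ‖v‖) := by
        apply mul_le_mul
        · simp [hv]
        · exact Matrix.l2_opNorm_mulVec B v
        · positivity
        · norm_num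
    _ ≤ 1 := by rw [one_mul, hv, mul_one]; exact hBn

lemma eig_sq_one {A : Matrix (Fin d) (Fin d) ℂ} (hA : A.IsHermitian) (hsq : A ^ 2 = 1)
    (j : Fin d) : hA.eigenvalues j = 1 ∨ hA.eigenvalues j = -1 := by
  set μ := hA.eigenvalues j with hμ
  have hAv := hA.mulVec_eigenvectorBasis j
  have hne : ⇑(hA.eigenvectorBasis j) ≠ (0 : Fin d → ℂ) := by
    intro h
    have h1 := hA.eigenvectorBasis.orthonormal.1 j
    rw [show (hA.eigenvectorBasis j : EuclideanSpace ℂ (Fin d)) = 0 from by simpa using h] at h1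
    simp at h1
  have h2 : (μ ^ 2) • ⇑(hA.eigenvectorBasis j) = ⇑(hA.eigenvectorBasis j) := by
    have : (A * A) *ᵥ ⇑(hA.eigenvectorBasis j) = ⇑(hA.eigenvectorBasis j) := by
      rw [← pow_two, hsq, Matrix.one_mulVec]
    rw [← Matrix.mulVec_mulVec, hAv, Matrix.mulVec_smul, hAv, smul_smul, ← pow_two] at this
    exact this
  have h3 : (μ ^ 2 - 1) • ⇑(hA.eigenvectorBasis j) = 0 := by
    rw [sub_smul, one_smul, h2, sub_self]
  rcases smul_eq_zero.mp h3 with h | h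
  · have h4 : (μ - 1) * (μ + 1) = 0 := by nlinarith [h]
    rcases mul_eq_zero.mp h4 with h5 | h5
    · exact Or.inl (by linarith)
    · exact Or.inr (by linarith)
  · exact absurd h hne

lemma eq_of_inner_one {E : Type*} [NormedAddCommGroup E] [InnerProductSpace ℂ E] {u v : E}
    (hu : ‖u‖ ≤ 1) (hv : ‖v‖ = 1) (h : RCLike.re (inner ℂ u v : ℂ) = 1) : u = v := by
  have hsub : ‖u - v‖ ^ 2 ≤ 0 := by
    rw [norm_sub_sq (𝕜 := ℂ), h, hv]
    have h1 : ‖u‖ ^ 2 ≤ 1 := by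
      have := pow_le_one₀ (norm_nonneg u) hu (n := 2)
      simpa using this
    nlinarith
  have h0 : ‖u - v‖ = 0 := by
    have := sq_nonneg ‖u - v‖
    nlinarith [norm_nonneg (u - v)]
  exact sub_eq_zero.mp (norm_eq_zero.mp h0)

lemma eq_neg_of_inner_neg_one {E : Type*} [NormedAddCommGroup E] [InnerProductSpace ℂ E] {u v : E}
    (hu : ‖u‖ ≤ 1) (hv : ‖v‖ = 1) (h : RCLike.re (inner ℂ u v : ℂ) = -1) : u = -v := by
  have hadd : ‖u + v‖ ^ 2 ≤ 0 := by
    rw [norm_add_sq (𝕜 := ℂ), h, hv]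
    have h1 : ‖u‖ ^ 2 ≤ 1 := by
      have := pow_le_one₀ (norm_nonneg u) hu (n := 2)
      simpa using this
    nlinarith
  have h0 : ‖u + v‖ = 0 := by
    have := sq_nonneg ‖u + v‖
    nlinarith [norm_nonneg (u + v)]
  exact eq_neg_of_add_eq_zero_left (norm_eq_zero.mp h0)

lemma key_vec {A B₀ B₁ : Matrix (Fin d) (Fin d) ℂ} (hA : A.IsHermitian) (hsq : A ^ 2 = 1)
    {c c₀ c₁ : ℝ} (hc₀ : 0 < c₀) (hc₁ : 0 < c₁) (hsum : c₀ + c₁ = c)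
    (hB₀n : ‖B₀‖ ≤ 1) (hB₁n : ‖B₁‖ ≤ 1)
    (heq : c • A = c₀ • B₀ + c₁ • B₁) (j : Fin d) :
    B₀ *ᵥ ⇑(hA.eigenvectorBasis j) = A *ᵥ ⇑(hA.eigenvectorBasis j) := by
  set v : EuclideanSpace ℂ (Fin d) := hA.eigenvectorBasis j with hvdef
  set w : Fin d → ℂ := WithLp.equiv 2 (Fin d → ℂ) v with hwdef
  have hv1 : ‖v‖ = 1 := hA.eigenvectorBasis.orthonormal.1 j
  set μ : ℝ := hA.eigenvalues j with hμdef
  have hAv : A *ᵥ w = μ • w := hA.mulVec_eigenvectorBasis j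
  -- inner products
  set z₀ : ℂ := dotProduct (star w) (B₀ *ᵥ w) with hz₀def
  set z₁ : ℂ := dotProduct (star w) (B₁ *ᵥ w) with hz₁def
  have hww : dotProduct (star w) w = 1 := by
    have h1 : (inner ℂ v v : ℂ) = 1 := by
      rw [inner_self_eq_norm_sq_to_K, hv1]; norm_num
    rw [EuclideanSpace.inner_eq_star_dotProduct, dotProduct_comm] at h1
    exact h1
  -- scalar equation
  rw [rsmul, rsmul, rsmul] at heq
  have hdot := congrArg (fun M : Matrix (Fin d) (Fin d) ℂ =>
    dotProduct (star w) (M *ᵥ w)) heq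
  simp only [Matrix.add_mulVec, Matrix.smul_mulVec, dotProduct_add,
    dotProduct_smul, smul_eq_mul] at hdot
  rw [hAv, vsmul, dotProduct_smul, smul_eq_mul, hww, mul_one] at hdot
  -- hdot : (c:ℂ) * μ = (c₀:ℂ) * z₀ + (c₁:ℂ) * z₁
  have hre : c * μ = c₀ * z₀.re + c₁ * z₁.re := by
    have h2 := congrArg Complex.re hdot
    simpa [Complex.re_ofReal_mul] using h2
  have hz₀n : ‖z₀‖ ≤ 1 := dot_bound hB₀n v hv1
  have hz₁n : ‖z₁‖ ≤ 1 := dot_bound hB₁n v hv1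
  have hz₀re : |z₀.re| ≤ 1 := le_trans (Complex.abs_re_le_norm z₀) hz₀n
  have hz₁re : |z₁.re| ≤ 1 := le_trans (Complex.abs_re_le_norm z₁) hz₁n
  -- geometry
  set u : EuclideanSpace ℂ (Fin d) := (WithLp.equiv 2 (Fin d → ℂ)).symm (B₀ *ᵥ w) with hudef
  have hu : ‖u‖ ≤ 1 := by
    refine le_trans (Matrix.l2_opNorm_mulVec B₀ v) ?_
    rw [hv1, mul_one]; exact hB₀n
  have hinner : (inner ℂ v u : ℂ) = z₀ := (EuclideanSpace.inner_toLp_toLp w (B₀ *ᵥ w)).trans (dotProduct_comm _ _)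
  rcases eig_sq_one hA hsq j with hμ1 | hμ1
  · -- μ = 1
    have h10 : z₀.re ≤ 1 := (abs_le.mp hz₀re).2
    have h11 : z₁.re ≤ 1 := (abs_le.mp hz₁re).2
    have hz0 : z₀.re = 1 := by
      have e0 : c₀ * z₀.re ≤ c₀ * 1 := mul_le_mul_of_nonneg_left h10 hc₀.le
      have e1 : c₁ * z₁.re ≤ c₁ * 1 := mul_le_mul_of_nonneg_left h11 hc₁.le
      have hmu : μ = 1 := by rw [hμdef, hμ1]
      have hc0' : c₀ * z₀.re = c₀ * 1 := by
        rw [hmu] at hre; linarith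
      exact mul_left_cancel₀ hc₀.ne' hc0'
    have hreuv : RCLike.re (inner ℂ u v : ℂ) = 1 := by
      rw [← inner_conj_symm, hinner]
      simpa using hz0
    have huv : u = v := eq_of_inner_one hu hv1 hreuv
    have : B₀ *ᵥ w = w := congrArg (WithLp.equiv 2 (Fin d → ℂ)) huv
    rw [show v.ofLp = w from rfl, this, hAv, hμdef, hμ1, one_smul]
  · -- μ = -1
    have h10 : -1 ≤ z₀.re := (abs_le.mp hz₀re).1
    have h11 : -1 ≤ z₁.re := (abs_le.mp hz₁re).1
    have hz0 : z₀.re = -1 := by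
      have e0 : c₀ * (-1) ≤ c₀ * z₀.re := mul_le_mul_of_nonneg_left h10 hc₀.le
      have e1 : c₁ * (-1) ≤ c₁ * z₁.re := mul_le_mul_of_nonneg_left h11 hc₁.le
      have hmu : μ = -1 := by rw [hμdef, hμ1]
      have hc0' : c₀ * z₀.re = c₀ * (-1) := by
        rw [hmu] at hre; linarith
      exact mul_left_cancel₀ hc₀.ne' hc0'
    have hreuv : RCLike.re (inner ℂ u v : ℂ) = -1 := by
      rw [← inner_conj_symm, hinner]
      simpa using hz0
    have huv : u = -v := eq_neg_of_inner_neg_one hu hv1 hreuv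
    have hB : B₀ *ᵥ w = -w := congrArg (WithLp.equiv 2 (Fin d → ℂ)) huv
    rw [show v.ofLp = w from rfl, hB, hAv, hμdef, hμ1, neg_one_smul ℝ]
open Matrix
variable {d : ℕ}

lemma diag_norm_le (f : Fin d → ℝ) (hf : ∀ i, |f i| ≤ 1) :
    ‖(Matrix.diagonal (fun i => (f i : ℂ)) : Matrix (Fin d) (Fin d) ℂ)‖ ≤ 1 := by
  rw [Matrix.l2_opNorm_def]
  apply ContinuousLinearMap.opNorm_le_bound _ zero_le_one
  intro x
  rw [one_mul, LinearEquiv.trans_apply, LinearMap.coe_toContinuousLinearMap',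
    Matrix.toEuclideanLin_apply]
  rw [EuclideanSpace.norm_eq, EuclideanSpace.norm_eq]
  apply Real.sqrt_le_sqrt
  apply Finset.sum_le_sum
  intro i _
  have h1 : ((WithLp.equiv 2 (Fin d → ℂ)).symm
      ((Matrix.diagonal (fun i => (f i : ℂ))) *ᵥ (WithLp.equiv 2 (Fin d → ℂ)) x)) i
      = (f i : ℂ) * ((WithLp.equiv 2 (Fin d → ℂ)) x) i := by
    simp [Matrix.mulVec_diagonal]
  change ‖((WithLp.equiv 2 (Fin d → ℂ)).symm ((Matrix.diagonal (fun i => (f i : ℂ))) *ᵥ (WithLp.equiv 2 (Fin d → ℂ)) x)) i‖ ^ 2 ≤ ‖(WithLp.equiv 2 (Fin d → ℂ)) x i‖ ^ 2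
  rw [h1]
  have hfi : ‖(f i : ℂ)‖ ≤ 1 := by simpa [Complex.norm_real] using hf i
  have hx : (WithLp.equiv 2 (Fin d → ℂ)) x i = x i := rfl
  rw [hx]
  calc ‖(f i : ℂ) * x i‖ ^ 2 = (‖(f i : ℂ)‖ * ‖x i‖)^2 := by rw [norm_mul]
    _ ≤ (1 * ‖x i‖)^2 := by
        apply pow_le_pow_left₀ (by positivity) (by nlinarith [norm_nonneg (x i)])
    _ = ‖x i‖ ^ 2 := by ring

lemma conj_norm (U : Matrix.unitaryGroup (Fin d) ℂ) (D : Matrix (Fin d) (Fin d) ℂ) :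
    ‖(U : Matrix (Fin d) (Fin d) ℂ) * D * star (U : Matrix (Fin d) (Fin d) ℂ)‖ = ‖D‖ := by
  rw [CStarRing.norm_mul_mem_unitary _ (Unitary.star_mem U.2), CStarRing.norm_coe_unitary_mul]

lemma conj_herm (U : Matrix.unitaryGroup (Fin d) ℂ) (f : Fin d → ℝ) :
    ((U : Matrix (Fin d) (Fin d) ℂ) * Matrix.diagonal (fun i => (f i : ℂ)) *
      star (U : Matrix (Fin d) (Fin d) ℂ)).IsHermitian := by
  rw [Matrix.star_eq_conjTranspose]
  exact Matrix.isHermitian_mul_mul_conjTranspose _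
    (Matrix.isHermitian_diagonal_iff.mpr fun i =>
      show star ((f i : ℂ)) = _ from Complex.conj_ofReal _)

lemma conj_cancel (U : Matrix.unitaryGroup (Fin d) ℂ) {D E : Matrix (Fin d) (Fin d) ℂ}
    (h : (U : Matrix (Fin d) (Fin d) ℂ) * D * star (U : Matrix (Fin d) (Fin d) ℂ)
       = (U : Matrix (Fin d) (Fin d) ℂ) * E * star (U : Matrix (Fin d) (Fin d) ℂ)) : D = E := by
  have h1 := congrArg (fun M => star (U : Matrix (Fin d) (Fin d) ℂ) * M) h
  simp only [← mul_assoc, Unitary.coe_star_mul_self, one_mul] at h1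
  have h2 := congrArg (fun M => M * (U : Matrix (Fin d) (Fin d) ℂ)) h1
  simpa only [mul_assoc, Unitary.coe_star_mul_self, mul_one] using h2

lemma eig_abs_le {A : Matrix (Fin d) (Fin d) ℂ} (hA : A.IsHermitian) (hAn : ‖A‖ ≤ 1)
    (j : Fin d) : |hA.eigenvalues j| ≤ 1 := by
  set v : EuclideanSpace ℂ (Fin d) := hA.eigenvectorBasis j with hvdef
  have hv1 : ‖v‖ = 1 := hA.eigenvectorBasis.orthonormal.1 j
  have h := Matrix.l2_opNorm_mulVec A v
  have h2 : (EuclideanSpace.equiv (Fin d) ℂ).symm (A *ᵥ v)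
      = hA.eigenvalues j • v :=
    congrArg (WithLp.equiv 2 (Fin d → ℂ)).symm (hA.mulVec_eigenvectorBasis j)
  rw [h2, norm_smul, hv1, mul_one, Real.norm_eq_abs] at h
  linarith

lemma backward {A : Matrix (Fin d) (Fin d) ℂ} (hA : A.IsHermitian) (hAn : ‖A‖ ≤ 1)
    (h : ∀ (c c₀ c₁ : ℝ) (B₀ B₁ : Matrix (Fin d) (Fin d) ℂ),
        0 < c → 0 < c₀ → 0 < c₁ → c₀ + c₁ = c →
        B₀.IsHermitian → B₁.IsHermitian → ‖B₀‖ ≤ 1 → ‖B₁‖ ≤ 1 →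
        c • A = c₀ • B₀ + c₁ • B₁ →
        B₀ = A ∧ B₁ = A) : A ^ 2 = 1 := by
  by_contra hne
  set U := hA.eigenvectorUnitary with hUdef
  have hAeq : A = (U : Matrix (Fin d) (Fin d) ℂ) *
      Matrix.diagonal (fun i => (hA.eigenvalues i : ℂ)) *
      star (U : Matrix (Fin d) (Fin d) ℂ) := hA.spectral_theorem
  have hUU : star (U : Matrix (Fin d) (Fin d) ℂ) * (U : Matrix (Fin d) (Fin d) ℂ) = 1 :=
    Unitary.coe_star_mul_self U
  have hUU2 : (U : Matrix (Fin d) (Fin d) ℂ) * star (U : Matrix (Fin d) (Fin d) ℂ) = 1 :=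
    Unitary.mul_star_self_of_mem U.2
  -- there is an eigenvalue with square ≠ 1
  have hex : ∃ j, hA.eigenvalues j ≠ 1 ∧ hA.eigenvalues j ≠ -1 := by
    by_contra h2
    push_neg at h2
    apply hne
    have hDD : Matrix.diagonal (fun i => (hA.eigenvalues i : ℂ)) *
        Matrix.diagonal (fun i => (hA.eigenvalues i : ℂ)) = 1 := by
      rw [Matrix.diagonal_mul_diagonal, ← Matrix.diagonal_one,
        Matrix.diagonal_eq_diagonal_iff]
      intro i
      rcases eq_or_ne (hA.eigenvalues i) 1 with h3 | h3
      · rw [h3]; norm_num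
      · rw [h2 i h3]; norm_num
    rw [pow_two, hAeq]
    calc ((U : Matrix (Fin d) (Fin d) ℂ) * Matrix.diagonal (fun i => (hA.eigenvalues i : ℂ)) *
          star (U : Matrix (Fin d) (Fin d) ℂ)) *
        ((U : Matrix (Fin d) (Fin d) ℂ) * Matrix.diagonal (fun i => (hA.eigenvalues i : ℂ)) *
          star (U : Matrix (Fin d) (Fin d) ℂ))
        = (U : Matrix (Fin d) (Fin d) ℂ) * (Matrix.diagonal (fun i => (hA.eigenvalues i : ℂ)) *
            Matrix.diagonal (fun i => (hA.eigenvalues i : ℂ))) *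
          star (U : Matrix (Fin d) (Fin d) ℂ) := by
          simp only [mul_assoc]
          rw [← mul_assoc (star (U : Matrix (Fin d) (Fin d) ℂ)), hUU, one_mul]
      _ = 1 := by rw [hDD, mul_one, hUU2]
  obtain ⟨j, hj1, hjm1⟩ := hex
  have habs : |hA.eigenvalues j| < 1 := by
    rcases lt_or_eq_of_le (eig_abs_le hA hAn j) with h3 | h3
    · exact h3
    · rcases (abs_eq zero_le_one).mp h3 with h4 | h4
      · exact absurd h4 hj1
      · exact absurd h4 hjm1
  set f₀ : Fin d → ℝ :=
    fun i => hA.eigenvalues i + if i = j then 1 - |hA.eigenvalues j| else 0 with hf₀def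
  set f₁ : Fin d → ℝ :=
    fun i => hA.eigenvalues i - if i = j then 1 - |hA.eigenvalues j| else 0 with hf₁def
  have hf₀ : ∀ i, |f₀ i| ≤ 1 := by
    intro i
    show |hA.eigenvalues i + (if i = j then 1 - |hA.eigenvalues j| else 0)| ≤ 1
    rcases eq_or_ne i j with rfl | hij
    · rw [if_pos rfl, abs_le]
      rcases abs_cases (hA.eigenvalues i) with ⟨h5, h6⟩ | ⟨h5, h6⟩ <;>
        constructor <;> linarith
    · rw [if_neg hij, add_zero]
      exact eig_abs_le hA hAn i
  have hf₁ : ∀ i, |f₁ i| ≤ 1 := by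
    intro i
    show |hA.eigenvalues i - (if i = j then 1 - |hA.eigenvalues j| else 0)| ≤ 1
    rcases eq_or_ne i j with rfl | hij
    · rw [if_pos rfl, abs_le]
      rcases abs_cases (hA.eigenvalues i) with ⟨h5, h6⟩ | ⟨h5, h6⟩ <;>
        constructor <;> linarith
    · rw [if_neg hij, sub_zero]
      exact eig_abs_le hA hAn i
  set B₀ : Matrix (Fin d) (Fin d) ℂ := (U : Matrix (Fin d) (Fin d) ℂ) *
      Matrix.diagonal (fun i => (f₀ i : ℂ)) * star (U : Matrix (Fin d) (Fin d) ℂ) with hB₀def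
  set B₁ : Matrix (Fin d) (Fin d) ℂ := (U : Matrix (Fin d) (Fin d) ℂ) *
      Matrix.diagonal (fun i => (f₁ i : ℂ)) * star (U : Matrix (Fin d) (Fin d) ℂ) with hB₁def
  have hdec : (2 : ℝ) • A = (1 : ℝ) • B₀ + (1 : ℝ) • B₁ := by
    rw [one_smul, one_smul, hB₀def, hB₁def, ← add_mul, ← mul_add, Matrix.diagonal_add]
    have hdiag : (fun i => (f₀ i : ℂ) + (f₁ i : ℂ))
        = (2 : ℂ) • fun i => (hA.eigenvalues i : ℂ) := by
      funext i
      have hr : f₀ i + f₁ i = 2 * hA.eigenvalues i := by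
        simp only [hf₀def, hf₁def]; ring
      show ((f₀ i : ℂ) + (f₁ i : ℂ)) = (2 : ℂ) * (hA.eigenvalues i : ℂ)
      rw [← Complex.ofReal_add, hr]
      push_cast
      ring
    rw [hdiag, Matrix.diagonal_smul, Matrix.mul_smul, Matrix.smul_mul, ← hAeq]
    ext i k
    simp [Matrix.smul_apply, Complex.real_smul]
  have hres := h 2 1 1 B₀ B₁ two_pos one_pos one_pos (by norm_num)
    (conj_herm U f₀) (conj_herm U f₁)
    (by rw [hB₀def, conj_norm]; exact diag_norm_le f₀ hf₀)
    (by rw [hB₁def, conj_norm]; exact diag_norm_le f₁ hf₁) hdec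
  have hB₀A : B₀ = A := hres.1
  rw [hB₀def, hAeq] at hB₀A
  have hDeq := conj_cancel U hB₀A
  have h6 := congrFun (congrFun hDeq j) j
  rw [Matrix.diagonal_apply_eq, Matrix.diagonal_apply_eq] at h6
  have h7 : f₀ j = hA.eigenvalues j := by exact_mod_cast h6
  have h8 : f₀ j = hA.eigenvalues j + (1 - |hA.eigenvalues j|) := by
    simp [hf₀def]
  rw [h8] at h7
  have : |hA.eigenvalues j| = 1 := by linarith
  linarith


lemma ext_on_basis {A : Matrix (Fin d) (Fin d) ℂ} (hA : A.IsHermitian)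
    {M N : Matrix (Fin d) (Fin d) ℂ}
    (h : ∀ j, M *ᵥ ⇑(hA.eigenvectorBasis j) = N *ᵥ ⇑(hA.eigenvectorBasis j)) : M = N := by
  apply Matrix.toEuclideanLin.injective
  apply Module.Basis.ext hA.eigenvectorBasis.toBasis
  intro j
  rw [OrthonormalBasis.coe_toBasis, Matrix.toEuclideanLin_apply, Matrix.toEuclideanLin_apply]
  congr 1
  exact h j

end Stmt4Aux

open Stmt4Aux in
/-- **Lemma 3**: a Hermitian matrix `A` with (`ℓ²`-operator) norm at most `1` is a
reflection (`A² = I`) if and only if every norm-preserving sub-decomposition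
`c·A = c₀·B₀ + c₁·B₁` (with `c₀, c₁ > 0`, `c₀ + c₁ = c`, and `B₀, B₁` Hermitian of norm
at most `1`) is trivial, i.e. `B₀ = B₁ = A`. -/
theorem stmt_4 {d : ℕ} (A : Matrix (Fin d) (Fin d) ℂ)
    (hA : A.IsHermitian) (hAn : ‖A‖ ≤ 1) :
    A ^ 2 = 1 ↔
      ∀ (c c₀ c₁ : ℝ) (B₀ B₁ : Matrix (Fin d) (Fin d) ℂ),
        0 < c → 0 < c₀ → 0 < c₁ → c₀ + c₁ = c →
        B₀.IsHermitian → B₁.IsHermitian → ‖B₀‖ ≤ 1 → ‖B₁‖ ≤ 1 →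
        c • A = c₀ • B₀ + c₁ • B₁ →
        B₀ = A ∧ B₁ = A := by
  constructor
  · intro hsq c c₀ c₁ B₀ B₁ hc hc₀ hc₁ hsum hB₀ hB₁ hB₀n hB₁n heq
    refine ⟨ext_on_basis hA (key_vec hA hsq hc₀ hc₁ hsum hB₀n hB₁n heq),
      ext_on_basis hA (key_vec hA hsq hc₁ hc₀ (show c₁ + c₀ = c by linarith) hB₁n hB₀n ?_)⟩
    rw [heq, add_comm]
  · intro h
    exact backward hA hAn h
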